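/- For a in (0, 1/2], let f_a:[0,1] → ℝ be the piecewise linear function with f_a(0) = f_a(1) = 0, f_a(a) = 1, linear on [0,a] and on [a,1]. Define λ(t) = b · min(1/4, a²/t²) for t ∈ [0,1], where b = (1/a + 1/(1-a))². Then λ is the unique minimizer of (4/3)∫_0^1 ρ(s)^{3/2} ds over all measurable ρ:[0,1] → [0,∞) satisfying ∫_0^t (ρ(s) - λ(s)) ds ≥ 0 for all t ∈ [0,1], and the minimal value is (3 - 4a²)/(6(1-a)³a²). -/

import Mathlib

open MeasureTheory Set

namespace GeoTwoPiece

noncomputable def lam (a : ℝ) : ℝ → ℝ := fun t => (1/a + 1/(1-a))^2 * min (1/4) (a^2 / t^2)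
noncomputable def g0 (a : ℝ) : ℝ → ℝ := fun t => min (1/2) (a / t)
noncomputable def h0 (a : ℝ) : ℝ → ℝ := (Ioc (2*a) 1).indicator (fun s => a / s^2)

lemma rpow_three_halves {x : ℝ} (hx : 0 ≤ x) : x ^ ((3:ℝ)/2) = (Real.sqrt x)^3 := by
  rw [Real.sqrt_eq_rpow, ← Real.rpow_natCast (x ^ ((1:ℝ)/2)) 3, ← Real.rpow_mul hx]
  norm_num

lemma bregman_key {x y : ℝ} (hx : 0 ≤ x) (hy : 0 ≤ y) :
    x ^ ((3:ℝ)/2) - y ^ ((3:ℝ)/2) - (3/2) * (Real.sqrt y * (x - y))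
      = (Real.sqrt x - Real.sqrt y)^2 * (Real.sqrt x + Real.sqrt y / 2) := by
  rw [rpow_three_halves hx, rpow_three_halves hy]
  have hux : (Real.sqrt x)^2 = x := Real.sq_sqrt hx
  have huy : (Real.sqrt y)^2 = y := Real.sq_sqrt hy
  linear_combination ((3:ℝ)/2 * Real.sqrt y) * hux - ((3:ℝ)/2 * Real.sqrt y) * huy

lemma bregman_nonneg {x y : ℝ} (hx : 0 ≤ x) (hy : 0 ≤ y) :
    0 ≤ x ^ ((3:ℝ)/2) - y ^ ((3:ℝ)/2) - (3/2) * (Real.sqrt y * (x - y)) := by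
  rw [bregman_key hx hy]
  have := Real.sqrt_nonneg x; have := Real.sqrt_nonneg y
  positivity

lemma bregman_eq {x y : ℝ} (hx : 0 ≤ x) (hy : 0 ≤ y)
    (h : x ^ ((3:ℝ)/2) - y ^ ((3:ℝ)/2) - (3/2) * (Real.sqrt y * (x - y)) = 0) : x = y := by
  rw [bregman_key hx hy] at h
  have hu := Real.sqrt_nonneg x; have hv := Real.sqrt_nonneg y
  have hxy : Real.sqrt x = Real.sqrt y := by
    rcases mul_eq_zero.mp h with h1 | h1
    · have := pow_eq_zero_iff (n := 2) (by norm_num) |>.mp h1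
      linarith
    · have h2 : Real.sqrt x = 0 := by linarith
      have h3 : Real.sqrt y = 0 := by linarith
      rw [h2, h3]
  calc x = (Real.sqrt x)^2 := (Real.sq_sqrt hx).symm
    _ = (Real.sqrt y)^2 := by rw [hxy]
    _ = y := Real.sq_sqrt hy

lemma le_one_add_rpow {x : ℝ} (hx : 0 ≤ x) : x ≤ 1 + x ^ ((3:ℝ)/2) := by
  rcases le_total x 1 with h | h
  · have := Real.rpow_nonneg hx ((3:ℝ)/2); linarith
  · have h2 : x ^ ((1:ℝ)) ≤ x ^ ((3:ℝ)/2) := Real.rpow_le_rpow_of_exponent_le h (by norm_num)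
    rw [Real.rpow_one] at h2; linarith

lemma lam_nonneg (a : ℝ) (t : ℝ) : 0 ≤ lam a t :=
  mul_nonneg (sq_nonneg _) (le_min (by norm_num) (div_nonneg (sq_nonneg _) (sq_nonneg _)))

lemma measurable_lam (a : ℝ) : Measurable (lam a) :=
  (measurable_const.min ((measurable_const.div (measurable_id.pow_const 2)))).const_mul _

lemma measurable_g0 (a : ℝ) : Measurable (g0 a) :=
  measurable_const.min (measurable_const.div measurable_id)

lemma measurable_h0 (a : ℝ) : Measurable (h0 a) :=
  (measurable_const.div (measurable_id.pow_const 2)).indicator measurableSet_Ioc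

lemma h0_nonneg {a : ℝ} (ha : 0 < a) (s : ℝ) : 0 ≤ h0 a s := by
  unfold h0
  apply Set.indicator_nonneg
  intro x _; positivity

section
variable {a : ℝ} (ha : 0 < a) (ha' : a ≤ 1/2)
include ha ha'

lemma one_sub_pos : 0 < 1 - a := by linarith

lemma c_eq : 1/a + 1/(1-a) = 1/(a*(1-a)) := by
  have h1 : a ≠ 0 := ne_of_gt ha
  have h2 : (1:ℝ) - a ≠ 0 := ne_of_gt (by linarith)
  field_simp
  ring

lemma c_pos : 0 < 1/(a*(1-a)) := by
  have : 0 < a * (1-a) := mul_pos ha (by linarith)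
  positivity

lemma lam_le (t : ℝ) : lam a t ≤ (1/(a*(1-a)))^2 / 4 := by
  unfold lam
  rw [c_eq ha ha']
  have h := min_le_left (1/4 : ℝ) (a^2/t^2)
  nlinarith [sq_nonneg (1/(a*(1-a)))]

lemma lam_left {t : ℝ} (ht0 : 0 < t) (ht : t ≤ 2*a) : lam a t = (1/(a*(1-a)))^2 / 4 := by
  unfold lam
  rw [c_eq ha ha', min_eq_left]
  · ring
  · rw [le_div_iff₀ (by positivity)]
    nlinarith

lemma lam_right {t : ℝ} (ht0 : 2*a < t) : lam a t = ((1/(a*(1-a))) * (a/t))^2 := by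
  have ht : 0 < t := lt_trans (by linarith) ht0
  unfold lam
  rw [c_eq ha ha', min_eq_right]
  · field_simp
  · rw [div_le_iff₀ (by positivity)]
    nlinarith

lemma sqrt_lam {t : ℝ} (ht0 : 0 < t) :
    Real.sqrt (lam a t) = (1/(a*(1-a))) * g0 a t := by
  have hc := c_pos ha ha'
  rcases le_or_gt t (2*a) with h | h
  · rw [lam_left ha ha' ht0 h]
    have h2 : (1/(a*(1-a)))^2/4 = ((1/(a*(1-a))) * (1/2))^2 := by ring
    have h3 : g0 a t = 1/2 := min_eq_left ((le_div_iff₀ ht0).mpr (by linarith))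
    rw [h2, Real.sqrt_sq (by positivity), h3]
  · have h3 : g0 a t = a/t := min_eq_right ((div_le_iff₀ ht0).mpr (by linarith))
    rw [lam_right ha ha' h, Real.sqrt_sq (by positivity), h3]

lemma g0_nonneg {t : ℝ} (ht0 : 0 < t) : 0 ≤ g0 a t :=
  le_min (by norm_num) (by positivity)

lemma g0_le_half {t : ℝ} (ht0 : 0 < t) : g0 a t ≤ 1/2 := min_le_left _ _

end


lemma int_inv_sq (a m : ℝ) (hm : 0 < m) (hm1 : m ≤ 1) :
    ∫ s in Ioc m 1, a / s^2 = a/m - a := by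
  rw [← intervalIntegral.integral_of_le hm1]
  have h : ∀ s : ℝ, a / s^2 = a * s^(-2:ℤ) := fun s => by
    rw [zpow_neg, zpow_two, div_eq_mul_inv, sq]
  simp_rw [h]
  rw [intervalIntegral.integral_const_mul,
    integral_zpow (Or.inr ⟨by norm_num, by
      rw [Set.uIcc_of_le hm1]; intro hc; exact absurd hc.1 (not_le.mpr hm)⟩)]
  have hm0 : m ≠ 0 := ne_of_gt hm
  norm_num
  rw [div_neg, div_one, div_eq_mul_inv]
  ring

lemma int_inv_cube (a m : ℝ) (hm : 0 < m) (hm1 : m ≤ 1) :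
    ∫ s in Ioc m 1, a / s^3 = a/(2*m^2) - a/2 := by
  rw [← intervalIntegral.integral_of_le hm1]
  have h : ∀ s : ℝ, a / s^3 = a * s^(-3:ℤ) := fun s => by
    rw [zpow_neg, zpow_ofNat, div_eq_mul_inv]
  simp_rw [h]
  rw [intervalIntegral.integral_const_mul,
    integral_zpow (Or.inr ⟨by norm_num, by
      rw [Set.uIcc_of_le hm1]; intro hc; exact absurd hc.1 (not_le.mpr hm)⟩)]
  have hm0 : m ≠ 0 := ne_of_gt hm
  have e2 : (m:ℝ) ^ (-3 + 1 : ℤ) = (m^2)⁻¹ := by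
    rw [show (-3 + 1 : ℤ) = -2 from rfl, zpow_neg, zpow_two, sq]
  rw [e2, one_zpow]
  push_cast
  field_simp
  ring

lemma integrableOn_inv_sq (a m : ℝ) (hm : 0 < m) :
    IntegrableOn (fun s => a / s^2) (Ioc m 1) := by
  apply (ContinuousOn.integrableOn_Icc ?_).mono_set Ioc_subset_Icc_self
  apply ContinuousOn.div continuousOn_const ((continuous_pow 2).continuousOn)
  intro x hx
  have : 0 < x := lt_of_lt_of_le hm hx.1
  positivity


lemma h0_integrableOn {a : ℝ} (ha : 0 < a) : IntegrableOn (h0 a) (Ioc (0:ℝ) 1) := by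
  unfold h0
  exact ((integrableOn_inv_sq a (2*a) (by linarith)).integrable_indicator
    measurableSet_Ioc).integrableOn

lemma tail_integral {a : ℝ} (ha : 0 < a) (ha' : a ≤ 1/2) {t : ℝ} (ht0 : 0 < t) (ht1 : t ≤ 1) :
    ∫ s in Ioc (0:ℝ) 1, (Ioi t).indicator (h0 a) s = g0 a t - a := by
  have hset : (Ioi t).indicator (h0 a) = (Ioc (max (2*a) t) 1).indicator (fun s => a/s^2) := by
    unfold h0
    rw [Set.indicator_indicator]
    have hseteq : Ioi t ∩ Ioc (2*a) 1 = Ioc (max (2*a) t) 1 := by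
      ext s
      simp only [mem_inter_iff, mem_Ioi, mem_Ioc]
      constructor
      · rintro ⟨h1, ⟨h2, h3⟩⟩
        exact ⟨max_lt h2 h1, h3⟩
      · rintro ⟨h1, h2⟩
        rw [max_lt_iff] at h1
        exact ⟨h1.2, h1.1, h2⟩
    rw [hseteq]
  have hm : 0 < max (2*a) t := lt_max_of_lt_right ht0
  have hm1 : max (2*a) t ≤ 1 := max_le (by linarith) ht1
  rw [hset, setIntegral_indicator measurableSet_Ioc,
    inter_eq_right.mpr (Ioc_subset_Ioc_left hm.le), int_inv_sq a _ hm hm1]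
  rcases le_total t (2*a) with h | h
  · rw [max_eq_left h]
    have hg : g0 a t = 1/2 := min_eq_left ((le_div_iff₀ ht0).mpr (by linarith))
    rw [hg]
    field_simp
  · rw [max_eq_right h]
    have hg : g0 a t = a/t := min_eq_right ((div_le_iff₀ ht0).mpr (by linarith))
    rw [hg]

lemma pairing {a : ℝ} (ha : 0 < a) (ha' : a ≤ 1/2) (d : ℝ → ℝ) (hdm : Measurable d)
    (hd : IntegrableOn d (Ioc (0:ℝ) 1))
    (hR : ∀ t ∈ Icc (0:ℝ) 1, 0 ≤ ∫ s in Ioc (0:ℝ) t, d s) :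
    0 ≤ ∫ t in Ioc (0:ℝ) 1, g0 a t * d t := by
  set μ := volume.restrict (Ioc (0:ℝ) 1) with hμ
  set F : ℝ × ℝ → ℝ := {p : ℝ × ℝ | p.1 < p.2}.indicator (fun p => d p.1 * h0 a p.2) with hF
  have hFint : Integrable F (μ.prod μ) :=
    (Integrable.mul_prod hd (h0_integrableOn ha)).indicator
      (measurableSet_lt measurable_fst measurable_snd)
  have hswap : (∫ t, ∫ s, F (t, s) ∂μ ∂μ) = ∫ s, ∫ t, F (t, s) ∂μ ∂μ :=
    integral_integral_swap hFint
  -- identify inner integral on the left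
  have hL : ∀ t ∈ Ioc (0:ℝ) 1, (∫ s, F (t, s) ∂μ) = d t * (g0 a t - a) := by
    intro t ht
    have heq : (fun s => F (t, s)) = fun s => d t * ((Ioi t).indicator (h0 a) s) := by
      funext s
      simp only [hF, Set.indicator_apply, mem_setOf_eq, mem_Ioi]
      split_ifs <;> simp
    rw [heq, integral_const_mul, hμ, tail_integral ha ha' ht.1 ht.2]
  -- right side is nonnegative
  have hRpos : 0 ≤ ∫ s, ∫ t, F (t, s) ∂μ ∂μ := by
    rw [hμ]
    apply setIntegral_nonneg measurableSet_Ioc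
    intro s hs
    have heq : (fun t => F (t, s)) = fun t => h0 a s * ((Iio s).indicator d t) := by
      funext t
      simp only [hF, Set.indicator_apply, mem_setOf_eq, mem_Iio]
      split_ifs <;> simp [mul_comm]
    rw [heq, integral_const_mul]
    apply mul_nonneg (h0_nonneg ha s)
    have hinter : Ioc (0:ℝ) 1 ∩ Iio s = Ioo 0 s := by
      ext x
      simp only [mem_inter_iff, mem_Ioc, mem_Iio, mem_Ioo]
      constructor
      · rintro ⟨⟨h1, _⟩, h3⟩; exact ⟨h1, h3⟩
      · rintro ⟨h1, h2⟩; exact ⟨⟨h1, le_trans h2.le hs.2⟩, h2⟩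
    rw [setIntegral_indicator measurableSet_Iio, hinter, ← integral_Ioc_eq_integral_Ioo]
    exact hR s ⟨hs.1.le, hs.2⟩
  have key : 0 ≤ ∫ t in Ioc (0:ℝ) 1, d t * (g0 a t - a) := by
    have h1 : (∫ t, ∫ s, F (t, s) ∂μ ∂μ) = ∫ t in Ioc (0:ℝ) 1, d t * (g0 a t - a) := by
      rw [hμ]
      exact setIntegral_congr_fun measurableSet_Ioc hL
    rw [← h1, hswap]
    exact hRpos
  -- integrability of g0 * d
  have hg0d : IntegrableOn (fun t => g0 a t * d t) (Ioc (0:ℝ) 1) := by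
    apply Integrable.mono' (hd.norm.const_mul (1/2))
      (((measurable_g0 a).mul hdm).aestronglyMeasurable)
    rw [ae_restrict_iff' measurableSet_Ioc]
    filter_upwards with t ht
    rw [Pi.mul_apply, norm_mul]
    have h1 : ‖g0 a t‖ ≤ 1/2 := by
      rw [Real.norm_eq_abs, abs_of_nonneg (g0_nonneg ha ha' ht.1)]
      exact g0_le_half ha ha' ht.1
    have := norm_nonneg (d t)
    nlinarith [norm_nonneg (g0 a t)]
  have h1 : 0 ≤ ∫ t in Ioc (0:ℝ) 1, d t := hR 1 ⟨zero_le_one, le_refl 1⟩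
  have hsplit : ∫ t in Ioc (0:ℝ) 1, d t * (g0 a t - a)
      = (∫ t in Ioc (0:ℝ) 1, g0 a t * d t) - a * ∫ t in Ioc (0:ℝ) 1, d t := by
    rw [← integral_const_mul a, ← integral_sub hg0d (hd.const_mul a)]
    congr 1
    funext t
    ring
  nlinarith


lemma lam_integrableOn {a : ℝ} (ha : 0 < a) (ha' : a ≤ 1/2) :
    IntegrableOn (lam a) (Ioc (0:ℝ) 1) := by
  apply Integrable.mono' (g := fun _ => (1/(a*(1-a)))^2/4)
    (integrableOn_const (s := Ioc (0:ℝ) 1) (μ := volume) measure_Ioc_lt_top.ne)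
    (measurable_lam a).aestronglyMeasurable
  filter_upwards with t
  rw [Real.norm_eq_abs, abs_of_nonneg (lam_nonneg a t)]
  exact lam_le ha ha' t

lemma measurable_lam32 (a : ℝ) : Measurable (fun t => lam a t ^ ((3:ℝ)/2)) :=
  (measurable_lam a).pow measurable_const

lemma lam32_integrableOn {a : ℝ} (ha : 0 < a) (ha' : a ≤ 1/2) :
    IntegrableOn (fun t => lam a t ^ ((3:ℝ)/2)) (Ioc (0:ℝ) 1) := by
  apply Integrable.mono' (g := fun _ => (1/(a*(1-a))/2)^3)
    (integrableOn_const (s := Ioc (0:ℝ) 1) (μ := volume) measure_Ioc_lt_top.ne)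
    (measurable_lam32 a).aestronglyMeasurable
  filter_upwards with t
  rw [Real.norm_eq_abs, abs_of_nonneg (Real.rpow_nonneg (lam_nonneg a t) _)]
  calc lam a t ^ ((3:ℝ)/2) ≤ ((1/(a*(1-a)))^2/4) ^ ((3:ℝ)/2) :=
        Real.rpow_le_rpow (lam_nonneg a t) (lam_le ha ha' t) (by norm_num)
    _ = (1/(a*(1-a))/2)^3 := by
        rw [rpow_three_halves (by positivity), show (1/(a*(1-a)))^2/4 = (1/(a*(1-a))/2)^2 by ring,
          Real.sqrt_sq (by linarith [c_pos ha ha'])]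

lemma lam32_integral {a : ℝ} (ha : 0 < a) (ha' : a ≤ 1/2) :
    ∫ t in Ioc (0:ℝ) 1, lam a t ^ ((3:ℝ)/2)
      = (3*a - 4*a^3)/8 * (1/(a*(1-a)))^3 := by
  have hc : 0 < 1/(a*(1-a)) := c_pos ha ha'
  have h2a1 : 2*a ≤ 1 := by linarith
  have hsplit : Ioc (0:ℝ) 1 = Ioc 0 (2*a) ∪ Ioc (2*a) 1 :=
    (Ioc_union_Ioc_eq_Ioc (by linarith) h2a1).symm
  have hint := lam32_integrableOn ha ha'
  rw [hsplit] at hint ⊢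
  rw [setIntegral_union (Set.Ioc_disjoint_Ioc_of_le le_rfl) measurableSet_Ioc
    (hint.mono_set Set.subset_union_left) (hint.mono_set Set.subset_union_right)]
  have hIleft : ∫ t in Ioc (0:ℝ) (2*a), lam a t ^ ((3:ℝ)/2)
      = (2*a) * (1/(a*(1-a))/2)^3 := by
    rw [setIntegral_congr_fun measurableSet_Ioc
      (g := fun _ => (1/(a*(1-a))/2)^3) ?_, setIntegral_const]
    · rw [measureReal_def, Real.volume_Ioc, ENNReal.toReal_ofReal (by linarith), smul_eq_mul]
      ring_nf
    · intro t ht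
      show lam a t ^ ((3:ℝ)/2) = (1/(a*(1-a))/2)^3
      rw [lam_left ha ha' ht.1 ht.2, rpow_three_halves (by positivity),
        show (1/(a*(1-a)))^2/4 = (1/(a*(1-a))/2)^2 by ring, Real.sqrt_sq (by positivity)]
  have hIright : ∫ t in Ioc (2*a) 1, lam a t ^ ((3:ℝ)/2)
      = (1/(a*(1-a))*a)^3/(2*(2*a)^2) - (1/(a*(1-a))*a)^3/2 := by
    rw [setIntegral_congr_fun measurableSet_Ioc
      (g := fun t => (1/(a*(1-a))*a)^3 / t^3) ?_]
    · exact int_inv_cube _ _ (by linarith) h2a1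
    · intro t ht
      have ht0 : 0 < t := lt_trans (by linarith) ht.1
      show lam a t ^ ((3:ℝ)/2) = (1/(a*(1-a))*a)^3 / t^3
      rw [lam_right ha ha' ht.1, rpow_three_halves (sq_nonneg _),
        Real.sqrt_sq (by positivity),
        show 1/(a*(1-a)) * (a/t) = (1/(a*(1-a))*a)/t by ring, div_pow]
  rw [hIleft, hIright]
  have ha0 : a ≠ 0 := ne_of_gt ha
  have h1a0 : (1:ℝ) - a ≠ 0 := ne_of_gt (by linarith)
  field_simp
  ring


lemma main_real {a : ℝ} (ha : 0 < a) (ha' : a ≤ 1/2) (ρ : ℝ → ℝ) (hm : Measurable ρ)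
    (h0 : ∀ t, 0 ≤ ρ t)
    (hρ32 : IntegrableOn (fun t => ρ t ^ ((3:ℝ)/2)) (Ioc (0:ℝ) 1))
    (hR : ∀ t ∈ Icc (0:ℝ) 1, (∫ s in Ioc (0:ℝ) t, lam a s) ≤ ∫ s in Ioc (0:ℝ) t, ρ s) :
    ((∫ t in Ioc (0:ℝ) 1, lam a t ^ ((3:ℝ)/2)) ≤ ∫ t in Ioc (0:ℝ) 1, ρ t ^ ((3:ℝ)/2)) ∧
    ((∫ t in Ioc (0:ℝ) 1, ρ t ^ ((3:ℝ)/2)) = (∫ t in Ioc (0:ℝ) 1, lam a t ^ ((3:ℝ)/2)) →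
      ∀ᵐ t ∂(volume.restrict (Ioc (0:ℝ) 1)), ρ t = lam a t) := by
  have hρint : IntegrableOn ρ (Ioc (0:ℝ) 1) := by
    apply Integrable.mono' (((integrableOn_const (C := (1:ℝ)) (s := Ioc (0:ℝ) 1) (μ := volume)
      measure_Ioc_lt_top.ne)).add hρ32) hm.aestronglyMeasurable
    filter_upwards with t
    show ‖ρ t‖ ≤ 1 + ρ t ^ ((3:ℝ)/2)
    rw [Real.norm_eq_abs, abs_of_nonneg (h0 t)]
    exact le_one_add_rpow (h0 t)
  have hlamint := lam_integrableOn ha ha'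
  have hlam32 := lam32_integrableOn ha ha'
  set d : ℝ → ℝ := fun t => ρ t - lam a t with hd
  have hdm : Measurable d := hm.sub (measurable_lam a)
  have hdint : IntegrableOn d (Ioc (0:ℝ) 1) := hρint.sub hlamint
  have hRd : ∀ t ∈ Icc (0:ℝ) 1, 0 ≤ ∫ s in Ioc (0:ℝ) t, d s := by
    intro t ht
    have h1 : IntegrableOn ρ (Ioc (0:ℝ) t) := hρint.mono_set (Ioc_subset_Ioc_right ht.2)
    have h2 : IntegrableOn (lam a) (Ioc (0:ℝ) t) := hlamint.mono_set (Ioc_subset_Ioc_right ht.2)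
    have h3 : ∫ s in Ioc (0:ℝ) t, d s
        = (∫ s in Ioc (0:ℝ) t, ρ s) - ∫ s in Ioc (0:ℝ) t, lam a s := integral_sub h1 h2
    rw [h3]
    linarith [hR t ht]
  have hpair := pairing ha ha' d hdm hdint hRd
  have hcpos := c_pos ha ha'
  have hsqd_int : IntegrableOn (fun t => Real.sqrt (lam a t) * d t) (Ioc (0:ℝ) 1) := by
    apply hdint.bdd_mul (c := 1/(a*(1-a))/2) (Real.continuous_sqrt.measurable.comp (measurable_lam a)).aestronglyMeasurable
    refine ae_of_all _ (fun x => ?_)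
    show ‖Real.sqrt (lam a x)‖ ≤ 1/(a*(1-a))/2
    rw [Real.norm_eq_abs, abs_of_nonneg (Real.sqrt_nonneg _)]
    calc Real.sqrt (lam a x) ≤ Real.sqrt ((1/(a*(1-a)))^2/4) :=
          Real.sqrt_le_sqrt (lam_le ha ha' x)
      _ = 1/(a*(1-a))/2 := by
          rw [show (1/(a*(1-a)))^2/4 = (1/(a*(1-a))/2)^2 by ring,
            Real.sqrt_sq (by linarith)]
  have hsq_eq : ∫ t in Ioc (0:ℝ) 1, Real.sqrt (lam a t) * d t
      = (1/(a*(1-a))) * ∫ t in Ioc (0:ℝ) 1, g0 a t * d t := by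
    rw [← integral_const_mul]
    apply setIntegral_congr_fun measurableSet_Ioc
    intro t ht
    show Real.sqrt (lam a t) * d t = 1/(a*(1-a)) * (g0 a t * d t)
    rw [sqrt_lam ha ha' ht.1]
    ring
  have hsq_nonneg : 0 ≤ ∫ t in Ioc (0:ℝ) 1, Real.sqrt (lam a t) * d t := by
    rw [hsq_eq]
    exact mul_nonneg hcpos.le hpair
  set br : ℝ → ℝ := fun t => ρ t ^ ((3:ℝ)/2) - lam a t ^ ((3:ℝ)/2)
      - (3/2) * (Real.sqrt (lam a t) * (ρ t - lam a t)) with hbr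
  have hbr_nonneg : ∀ t, 0 ≤ br t := fun t => bregman_nonneg (h0 t) (lam_nonneg a t)
  have hbr_int : IntegrableOn br (Ioc (0:ℝ) 1) :=
    (hρ32.sub hlam32).sub (hsqd_int.const_mul (3/2))
  have hbr_integral : ∫ t in Ioc (0:ℝ) 1, br t
      = (∫ t in Ioc (0:ℝ) 1, ρ t ^ ((3:ℝ)/2)) - (∫ t in Ioc (0:ℝ) 1, lam a t ^ ((3:ℝ)/2))
        - (3/2) * ∫ t in Ioc (0:ℝ) 1, Real.sqrt (lam a t) * d t := by
    have e3 := integral_sub (hρ32.sub hlam32) (hsqd_int.const_mul ((3:ℝ)/2))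
    have e2 := integral_sub hρ32 hlam32
    simp only [Pi.sub_apply] at e3
    rw [e2, integral_const_mul] at e3
    exact e3
  have hbrI_nonneg : 0 ≤ ∫ t in Ioc (0:ℝ) 1, br t :=
    setIntegral_nonneg measurableSet_Ioc (fun t _ => hbr_nonneg t)
  constructor
  · linarith
  · intro heq
    have hbr0 : ∫ t in Ioc (0:ℝ) 1, br t = 0 := by
      rw [hbr_integral, heq]
      linarith
    have hae := (integral_eq_zero_iff_of_nonneg hbr_nonneg hbr_int).mp hbr0
    filter_upwards [hae] with t ht
    exact bregman_eq (h0 t) (lam_nonneg a t) ht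


lemma lint_rpow_eq (f : ℝ → ℝ) (hf : ∀ t, 0 ≤ f t) :
    (∫⁻ t in Ioc (0:ℝ) 1, ENNReal.ofReal (f t) ^ ((3:ℝ)/2))
      = ∫⁻ t in Ioc (0:ℝ) 1, ENNReal.ofReal (f t ^ ((3:ℝ)/2)) :=
  lintegral_congr fun t => ENNReal.ofReal_rpow_of_nonneg (hf t) (by norm_num)

lemma rho_int {ρ : ℝ → ℝ} (hm : Measurable ρ) (h0 : ∀ t, 0 ≤ ρ t)
    (h32 : IntegrableOn (fun t => ρ t ^ ((3:ℝ)/2)) (Ioc (0:ℝ) 1)) :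
    IntegrableOn ρ (Ioc (0:ℝ) 1) := by
  apply Integrable.mono' (((integrableOn_const (C := (1:ℝ)) (s := Ioc (0:ℝ) 1) (μ := volume)
    measure_Ioc_lt_top.ne)).add h32) hm.aestronglyMeasurable
  filter_upwards with t
  show ‖ρ t‖ ≤ 1 + ρ t ^ ((3:ℝ)/2)
  rw [Real.norm_eq_abs, abs_of_nonneg (h0 t)]
  exact le_one_add_rpow (h0 t)

lemma constraint_real {a : ℝ} (ha : 0 < a) (ha' : a ≤ 1/2) {ρ : ℝ → ℝ}
    (hρ0 : ∀ t, 0 ≤ ρ t) (hρint : IntegrableOn ρ (Ioc (0:ℝ) 1))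
    (hcons : ∀ t ∈ Icc (0:ℝ) 1,
      (∫⁻ s in Ioc (0:ℝ) t, ENNReal.ofReal (lam a s)) ≤
        ∫⁻ s in Ioc (0:ℝ) t, ENNReal.ofReal (ρ s)) :
    ∀ t ∈ Icc (0:ℝ) 1, (∫ s in Ioc (0:ℝ) t, lam a s) ≤ ∫ s in Ioc (0:ℝ) t, ρ s := by
  intro t ht
  have hI1 : IntegrableOn (lam a) (Ioc (0:ℝ) t) :=
    (lam_integrableOn ha ha').mono_set (Ioc_subset_Ioc_right ht.2)
  have hI2 : IntegrableOn ρ (Ioc (0:ℝ) t) := hρint.mono_set (Ioc_subset_Ioc_right ht.2)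
  have h2 := hcons t ht
  rw [← ofReal_integral_eq_lintegral_ofReal hI1 (ae_of_all _ (lam_nonneg a)),
    ← ofReal_integral_eq_lintegral_ofReal hI2 (ae_of_all _ hρ0)] at h2
  exact (ENNReal.ofReal_le_ofReal_iff
    (setIntegral_nonneg measurableSet_Ioc fun s _ => hρ0 s)).mp h2

end GeoTwoPiece

open GeoTwoPiece Set

/-- For `a ∈ (0,1/2]`, the function `λ(t) = b·min(1/4, a²/t²)` with
`b = (1/a + 1/(1-a))²` is the unique minimizer of `(4/3)∫_0^1 ρ^{3/2}` over
nonnegative measurable `ρ` with `∫_0^t ρ ≥ ∫_0^t λ` for all `t ∈ [0,1]`, and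
the minimal value is `(3-4a²)/(6(1-a)³a²)`. -/
theorem geodesic_twopiece_optimizer (a : ℝ) (ha : 0 < a) (ha' : a ≤ 1/2) :
    let lam : ℝ → ℝ := fun t => (1/a + 1/(1-a))^2 * min (1/4) (a^2 / t^2)
    -- minimal value
    ((4/3 : ENNReal) * ∫⁻ t in Set.Ioc (0:ℝ) 1, ENNReal.ofReal (lam t) ^ ((3:ℝ)/2)
        = ENNReal.ofReal ((3 - 4*a^2) / (6*(1-a)^3*a^2))) ∧
    -- minimality
    (∀ ρ : ℝ → ℝ, Measurable ρ → (∀ t, 0 ≤ ρ t) →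
      (∀ t ∈ Set.Icc (0:ℝ) 1,
        ∫⁻ s in Set.Ioc (0:ℝ) t, ENNReal.ofReal (lam s) ≤
          ∫⁻ s in Set.Ioc (0:ℝ) t, ENNReal.ofReal (ρ s)) →
      (4/3 : ENNReal) * ∫⁻ t in Set.Ioc (0:ℝ) 1, ENNReal.ofReal (lam t) ^ ((3:ℝ)/2) ≤
        (4/3 : ENNReal) * ∫⁻ t in Set.Ioc (0:ℝ) 1, ENNReal.ofReal (ρ t) ^ ((3:ℝ)/2)) ∧
    -- uniqueness
    (∀ ρ : ℝ → ℝ, Measurable ρ → (∀ t, 0 ≤ ρ t) →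
      (∀ t ∈ Set.Icc (0:ℝ) 1,
        ∫⁻ s in Set.Ioc (0:ℝ) t, ENNReal.ofReal (lam s) ≤
          ∫⁻ s in Set.Ioc (0:ℝ) t, ENNReal.ofReal (ρ s)) →
      ((4/3 : ENNReal) * ∫⁻ t in Set.Ioc (0:ℝ) 1, ENNReal.ofReal (ρ t) ^ ((3:ℝ)/2)
        = (4/3 : ENNReal) * ∫⁻ t in Set.Ioc (0:ℝ) 1, ENNReal.ofReal (lam t) ^ ((3:ℝ)/2)) →
      (∀ᵐ t ∂(volume.restrict (Set.Ioc (0:ℝ) 1)), ρ t = lam t)) := by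
  intro lamL
  have hlam : lamL = GeoTwoPiece.lam a := rfl
  have h1a : (0:ℝ) < 1 - a := by linarith
  have ha0 : a ≠ 0 := ne_of_gt ha
  have h1a0 : (1:ℝ) - a ≠ 0 := ne_of_gt h1a
  have hVnn : 0 ≤ ∫ t in Ioc (0:ℝ) 1, GeoTwoPiece.lam a t ^ ((3:ℝ)/2) :=
    setIntegral_nonneg measurableSet_Ioc fun t _ => Real.rpow_nonneg (lam_nonneg a t) _
  have hlamlint : (∫⁻ t in Set.Ioc (0:ℝ) 1, ENNReal.ofReal (lamL t) ^ ((3:ℝ)/2))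
      = ENNReal.ofReal (∫ t in Ioc (0:ℝ) 1, GeoTwoPiece.lam a t ^ ((3:ℝ)/2)) := by
    rw [hlam, lint_rpow_eq _ (lam_nonneg a),
      ← ofReal_integral_eq_lintegral_ofReal (lam32_integrableOn ha ha')
        (ae_of_all _ fun t => Real.rpow_nonneg (lam_nonneg a t) _)]
  have h43 : (4/3 : ENNReal) = ENNReal.ofReal (4/3) := by
    rw [ENNReal.ofReal_div_of_pos (by norm_num)]
    norm_num
  refine ⟨?_, ?_, ?_⟩
  · -- value
    rw [hlamlint, h43, ← ENNReal.ofReal_mul (by norm_num), lam32_integral ha ha']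
    congr 1
    field_simp
    ring
  · -- minimality
    intro ρ hρm hρ0 hcons
    by_cases hfin : (∫⁻ t in Set.Ioc (0:ℝ) 1, ENNReal.ofReal (ρ t) ^ ((3:ℝ)/2)) = ⊤
    · rw [hfin, ENNReal.mul_top (by norm_num)]
      exact le_top
    · have hrw := lint_rpow_eq ρ hρ0
      have hint32 : IntegrableOn (fun t => ρ t ^ ((3:ℝ)/2)) (Ioc (0:ℝ) 1) := by
        constructor
        · exact (hρm.pow measurable_const).aestronglyMeasurable
        · rw [hasFiniteIntegral_iff_ofReal
            (ae_of_all _ fun t => Real.rpow_nonneg (hρ0 t) _), ← hrw]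
          exact Ne.lt_top hfin
      have hRreal := constraint_real ha ha' hρ0 (rho_int hρm hρ0 hint32) hcons
      have hmain := (main_real ha ha' ρ hρm hρ0 hint32 hRreal).1
      rw [hlamlint, hrw, ← ofReal_integral_eq_lintegral_ofReal hint32
        (ae_of_all _ fun t => Real.rpow_nonneg (hρ0 t) _)]
      exact mul_le_mul_right (ENNReal.ofReal_le_ofReal hmain) _
  · -- uniqueness
    intro ρ hρm hρ0 hcons heq
    have hrw := lint_rpow_eq ρ hρ0
    have hfin : (∫⁻ t in Set.Ioc (0:ℝ) 1, ENNReal.ofReal (ρ t) ^ ((3:ℝ)/2)) ≠ ⊤ := by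
      intro hT
      rw [hT, hlamlint, ENNReal.mul_top (by norm_num)] at heq
      exact (ENNReal.mul_ne_top ((ENNReal.div_lt_top (by norm_num) (by norm_num)).ne)
        ENNReal.ofReal_ne_top) heq.symm
    have hint32 : IntegrableOn (fun t => ρ t ^ ((3:ℝ)/2)) (Ioc (0:ℝ) 1) := by
      constructor
      · exact (hρm.pow measurable_const).aestronglyMeasurable
      · rw [hasFiniteIntegral_iff_ofReal
          (ae_of_all _ fun t => Real.rpow_nonneg (hρ0 t) _), ← hrw]
        exact Ne.lt_top hfin
    have hRreal := constraint_real ha ha' hρ0 (rho_int hρm hρ0 hint32) hcons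
    have hcancel : (∫⁻ t in Set.Ioc (0:ℝ) 1, ENNReal.ofReal (ρ t) ^ ((3:ℝ)/2))
        = ∫⁻ t in Set.Ioc (0:ℝ) 1, ENNReal.ofReal (lamL t) ^ ((3:ℝ)/2) :=
      (ENNReal.mul_right_strictMono (by norm_num)
        ((ENNReal.div_lt_top (by norm_num) (by norm_num)).ne)).injective heq
    rw [hlamlint, hrw, ← ofReal_integral_eq_lintegral_ofReal hint32
      (ae_of_all _ fun t => Real.rpow_nonneg (hρ0 t) _)] at hcancel
    have hreal : (∫ t in Ioc (0:ℝ) 1, ρ t ^ ((3:ℝ)/2))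
        = ∫ t in Ioc (0:ℝ) 1, GeoTwoPiece.lam a t ^ ((3:ℝ)/2) :=
      (ENNReal.ofReal_eq_ofReal_iff
        (setIntegral_nonneg measurableSet_Ioc fun t _ => Real.rpow_nonneg (hρ0 t) _)
        hVnn).mp hcancel
    exact (main_real ha ha' ρ hρm hρ0 hint32 hRreal).2 hreal
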